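/- (Theorem 1) Bounds on the PT efficiency: if (v, u) is PT-primal-feasible with goal price τ and the normalized virtual input satisfies ∑_{i∈I} v i · X i o = 1, then the virtual output β := ∑_{r∈R} u r · Y r o satisfies 0 < β ≤ 1; consequently the PT efficiency E := (∑_{r∈R} u r · Y r o) / (∑_{i∈I} v i · X i o) satisfies 0 < E ≤ 1, and the PT inefficiency F := (∑_i v i · X i o − ∑_r u r · Y r o)/(∑_i v i · X i o) satisfies F = 1 − E and 0 ≤ F < 1. -/
import Mathlib


open Finset

/-- A triple `(π, Q, P)` is PT-dual-feasible. -/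
def PTDualFeasible {I R J : Type*} [Fintype I] [Fintype R] [Fintype J]
    (X : I → J → ℝ) (Y : R → J → ℝ) (o : J)
    (π : J → ℝ) (Q : I → ℝ) (P : R → ℝ) : Prop :=
  (∀ j, 0 ≤ π j) ∧ (∀ i, 0 ≤ Q i) ∧ (∀ r, 0 ≤ P r) ∧
  (∀ i, (∑ j, X i j * π j) + Q i * X i o = X i o) ∧
  (∀ r, -(∑ j, Y r j * π j) + P r * Y r o = -(Y r o))

/-- A pair `(v, u)` is PT-primal-feasible with goal price `τ`. -/
def PTPrimalFeasible {I R J : Type*} [Fintype I] [Fintype R] [Fintype J]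
    (X : I → J → ℝ) (Y : R → J → ℝ) (o : J) (τ : ℝ)
    (v : I → ℝ) (u : R → ℝ) : Prop :=
  (∀ j, 0 ≤ (∑ i, v i * X i j) - ∑ r, u r * Y r j) ∧
  (∀ i, τ ≤ X i o * v i) ∧ (∀ r, τ ≤ Y r o * u r)

/-- (Theorem 1) Bounds on the PT efficiency. -/
theorem pt_efficiency_bounds
    {I R J : Type*} [Fintype I] [Fintype R] [Fintype J]
    [Nonempty I] [Nonempty R] [Nonempty J]
    (X : I → J → ℝ) (Y : R → J → ℝ)
    (hX : ∀ i j, 0 < X i j) (hY : ∀ r j, 0 < Y r j)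
    (o : J) (τ : ℝ) (hτ : 0 < τ)
    (v : I → ℝ) (u : R → ℝ)
    (hprimal : PTPrimalFeasible X Y o τ v u)
    (hnorm : ∑ i, v i * X i o = 1) :
    (0 < ∑ r, u r * Y r o) ∧ (∑ r, u r * Y r o ≤ 1) ∧
    (0 < (∑ r, u r * Y r o) / (∑ i, v i * X i o)) ∧
    ((∑ r, u r * Y r o) / (∑ i, v i * X i o) ≤ 1) ∧
    (((∑ i, v i * X i o) - ∑ r, u r * Y r o) / (∑ i, v i * X i o)
      = 1 - (∑ r, u r * Y r o) / (∑ i, v i * X i o)) ∧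
    (0 ≤ ((∑ i, v i * X i o) - ∑ r, u r * Y r o) / (∑ i, v i * X i o)) ∧
    (((∑ i, v i * X i o) - ∑ r, u r * Y r o) / (∑ i, v i * X i o) < 1) := by

  obtain ⟨h1, h2, h3⟩ := hprimal
  have hβpos : 0 < ∑ r, u r * Y r o := by
    have : ∀ r : R, 0 < u r * Y r o := fun r => by
      have := h3 r; nlinarith [hY r o, hτ]
    exact Finset.sum_pos (fun r _ => this r) Finset.univ_nonempty
  have hβle : ∑ r, u r * Y r o ≤ 1 := by
    have := h1 o; linarith
  rw [hnorm]
  refine ⟨hβpos, hβle, by simpa using hβpos, by simpa using hβle, by ring, ?_, ?_⟩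
  · simp; linarith
  · simp; linarith
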